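/- Let F denote the real vector space of trilinear forms C : V × V × V → ℝ that are alternating in the last two arguments and semi-basic in the last two arguments, and let Λ³_v denote the space of alternating trilinear forms on V that are semi-basic in every argument. For a linear map K : V → V define τ_K : F → Λ³_v by (τ_K C)(X,Y,Z) = C(KX,Y,Z) − C(KY,X,Z) + C(KZ,X,Y). Then both τ_J : F → Λ³_v and τ_h : F → Λ³_v are well defined (i.e. τ_J C and τ_h C are indeed alternating and semi-basic in all arguments for every C ∈ F) and surjective. -/

import Mathlib

open Module

/-- Model of the tangent space of `J¹π` at a point: `V = ℝ^{n+1} × ℝ^n`, the first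
factor spanned by the horizontal vectors `e_0, …, e_n` (`e_0` the time direction),
the second by the vertical vectors `f_1, …, f_n` (here `f_k = fbase ⟨k-1,_⟩`). -/
abbrev Vv (n : ℕ) : Type := (Fin (n + 1) → ℝ) × (Fin n → ℝ)

/-- A vector of `V` is vertical if it lies in the span of `f_1, …, f_n`,
i.e. its first component vanishes. -/
def IsVert {n : ℕ} (v : Vv n) : Prop := v.1 = 0

/-- The vertical endomorphism `J : V → V`: `J e_0 = 0`, `J e_i = f_i` (1 ≤ i ≤ n),
`J f_i = 0`. -/
noncomputable def Jv (n : ℕ) : Vv n →ₗ[ℝ] Vv n :=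
  LinearMap.prod 0
    ((LinearMap.funLeft ℝ ℝ Fin.succ).comp (LinearMap.fst ℝ (Fin (n + 1) → ℝ) (Fin n → ℝ)))

/-- The horizontal projector `h : V → V`: `h e_α = e_α` (0 ≤ α ≤ n), `h f_i = 0`. -/
noncomputable def Hv (n : ℕ) : Vv n →ₗ[ℝ] Vv n :=
  LinearMap.prod (LinearMap.fst ℝ (Fin (n + 1) → ℝ) (Fin n → ℝ)) 0

set_option maxSynthPendingDepth 3
set_option synthInstance.maxHeartbeats 400000

/-- `F`: the space of trilinear forms on `V` that are alternating in the last two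
arguments and semi-basic in the last two arguments (model of `T* ⊗ Λ²T_v*`). -/
noncomputable def Fsub (n : ℕ) : Submodule ℝ (Vv n →ₗ[ℝ] Vv n →ₗ[ℝ] Vv n →ₗ[ℝ] ℝ) where
  carrier := { C | (∀ X Y Z, C X Y Z = - C X Z Y) ∧
    (∀ X v Z, IsVert v → C X v Z = 0) ∧
    (∀ X Y v, IsVert v → C X Y v = 0) }
  add_mem' := by
    rintro A B ⟨a1, a2, a3⟩ ⟨b1, b2, b3⟩
    refine ⟨fun X Y Z => ?_, fun X v Z hv => ?_, fun X Y v hv => ?_⟩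
    · simp only [LinearMap.add_apply]; rw [a1, b1]; ring
    · simp [a2 X v Z hv, b2 X v Z hv]
    · simp [a3 X Y v hv, b3 X Y v hv]
  zero_mem' := by
    refine ⟨fun X Y Z => ?_, fun X v Z hv => ?_, fun X Y v hv => ?_⟩ <;> simp
  smul_mem' := by
    rintro c A ⟨a1, a2, a3⟩
    refine ⟨fun X Y Z => ?_, fun X v Z hv => ?_, fun X Y v hv => ?_⟩
    · simp only [LinearMap.smul_apply, smul_eq_mul]; rw [a1]; ring
    · simp [a2 X v Z hv]
    · simp [a3 X Y v hv]

/-- `Λ³T_v*`: the space of alternating trilinear forms on `V` that are semi-basic in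
every argument. -/
noncomputable def Lv3 (n : ℕ) : Submodule ℝ (Vv n →ₗ[ℝ] Vv n →ₗ[ℝ] Vv n →ₗ[ℝ] ℝ) where
  carrier := { D | (∀ X Y Z, D X Y Z = - D Y X Z) ∧
    (∀ X Y Z, D X Y Z = - D X Z Y) ∧
    (∀ v Y Z, IsVert v → D v Y Z = 0) ∧
    (∀ X v Z, IsVert v → D X v Z = 0) ∧
    (∀ X Y v, IsVert v → D X Y v = 0) }
  add_mem' := by
    rintro A B ⟨a1, a2, a3, a4, a5⟩ ⟨b1, b2, b3, b4, b5⟩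
    refine ⟨fun X Y Z => ?_, fun X Y Z => ?_, fun v Y Z hv => ?_, fun X v Z hv => ?_,
      fun X Y v hv => ?_⟩
    · simp only [LinearMap.add_apply]; rw [a1, b1]; ring
    · simp only [LinearMap.add_apply]; rw [a2, b2]; ring
    · simp [a3 v Y Z hv, b3 v Y Z hv]
    · simp [a4 X v Z hv, b4 X v Z hv]
    · simp [a5 X Y v hv, b5 X Y v hv]
  zero_mem' := by
    refine ⟨fun X Y Z => ?_, fun X Y Z => ?_, fun v Y Z hv => ?_, fun X v Z hv => ?_,
      fun X Y v hv => ?_⟩ <;> simp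
  smul_mem' := by
    rintro c A ⟨a1, a2, a3, a4, a5⟩
    refine ⟨fun X Y Z => ?_, fun X Y Z => ?_, fun v Y Z hv => ?_, fun X v Z hv => ?_,
      fun X Y v hv => ?_⟩
    · simp only [LinearMap.smul_apply, smul_eq_mul]; rw [a1]; ring
    · simp only [LinearMap.smul_apply, smul_eq_mul]; rw [a2]; ring
    · simp [a3 v Y Z hv]
    · simp [a4 X v Z hv]
    · simp [a5 X Y v hv]

/-- The alternating operator `τ_K`:
`(τ_K C)(X,Y,Z) = C(KX,Y,Z) − C(KY,X,Z) + C(KZ,X,Y)`. -/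
noncomputable def tauF (n : ℕ) (K : Vv n →ₗ[ℝ] Vv n)
    (C : Vv n →ₗ[ℝ] Vv n →ₗ[ℝ] Vv n →ₗ[ℝ] ℝ) : Vv n → Vv n → Vv n → ℝ :=
  fun X Y Z => C (K X) Y Z - C (K Y) X Z + C (K Z) X Y


/-! ### Auxiliary material -/

/-- The time direction `e_0`. -/
noncomputable def e0v (n : ℕ) : Vv n := (Pi.single 0 1, 0)

/-- The vertical-to-horizontal lift `σ`: `σ f_i = e_i`, `σ e_α = 0`. -/
noncomputable def sigv (n : ℕ) : Vv n →ₗ[ℝ] Vv n where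
  toFun U := (Fin.cons 0 U.2, 0)
  map_add' U V := by
    refine Prod.ext (funext fun j => ?_) (by simp)
    refine Fin.cases ?_ (fun i => ?_) j <;> simp
  map_smul' c U := by
    refine Prod.ext (funext fun j => ?_) (by simp)
    refine Fin.cases ?_ (fun i => ?_) j <;> simp

lemma Jv_apply {n : ℕ} (X : Vv n) : Jv n X = (0, fun i => X.1 i.succ) := rfl

lemma Hv_apply {n : ℕ} (X : Vv n) : Hv n X = (X.1, 0) := rfl

lemma Jv_vert {n : ℕ} (v : Vv n) (hv : IsVert v) : Jv n v = 0 := by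
  rw [Jv_apply, hv]
  exact Prod.ext rfl (funext fun i => rfl)

lemma Hv_vert {n : ℕ} (v : Vv n) (hv : IsVert v) : Hv n v = 0 := by
  rw [Hv_apply, hv]; rfl

lemma vert_snd {n : ℕ} (X : Vv n) : IsVert ((0, X.2) : Vv n) := rfl

/-- Decomposition of a vector into its `e_0` part, remaining horizontal part and
vertical part. -/
lemma decompX {n : ℕ} (X : Vv n) :
    X = X.1 0 • e0v n + sigv n (Jv n X) + ((0, X.2) : Vv n) := by
  refine Prod.ext (funext fun j => ?_) ?_
  · refine Fin.cases ?_ (fun i => ?_) j <;>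
      simp [e0v, sigv, Jv_apply, Pi.single_apply, Fin.succ_ne_zero]
  · simp [e0v, sigv]

lemma decompH {n : ℕ} (X : Vv n) :
    ((X.1, 0) : Vv n) = X.1 0 • e0v n + sigv n (Jv n X) := by
  have h := decompX (n := n) ((X.1, 0) : Vv n)
  simpa [e0v, sigv, Jv_apply] using h

lemma splitX {n : ℕ} (X : Vv n) : X = ((X.1, 0) : Vv n) + ((0, X.2) : Vv n) := by
  refine Prod.ext (by simp) (by simp)

section Expand

variable {n : ℕ} (D : Vv n →ₗ[ℝ] Vv n →ₗ[ℝ] Vv n →ₗ[ℝ] ℝ)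

lemma expand1 (h : ∀ v Y Z, IsVert v → D v Y Z = 0) (X Y Z : Vv n) :
    D X Y Z = X.1 0 * D (e0v n) Y Z + D (sigv n (Jv n X)) Y Z := by
  conv_lhs => rw [decompX X]
  simp [h (0, X.2) Y Z rfl]

lemma expand2 (h : ∀ X v Z, IsVert v → D X v Z = 0) (A Y Z : Vv n) :
    D A Y Z = Y.1 0 * D A (e0v n) Z + D A (sigv n (Jv n Y)) Z := by
  conv_lhs => rw [decompX Y]
  simp [h A (0, Y.2) Z rfl]

lemma expand3 (h : ∀ X Y v, IsVert v → D X Y v = 0) (A B Z : Vv n) :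
    D A B Z = Z.1 0 * D A B (e0v n) + D A B (sigv n (Jv n Z)) := by
  conv_lhs => rw [decompX Z]
  simp [h A B (0, Z.2) rfl]

lemma hred1 (h : ∀ v Y Z, IsVert v → D v Y Z = 0) (X Y Z : Vv n) :
    D ((X.1, 0) : Vv n) Y Z = D X Y Z := by
  conv_rhs => rw [splitX X, map_add]
  rw [LinearMap.add_apply, LinearMap.add_apply, h (0, X.2) Y Z rfl, add_zero]

end Expand

/-- The operator `τ_K` as a linear map on trilinear forms. -/
noncomputable def tauL (n : ℕ) (K : Vv n →ₗ[ℝ] Vv n)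
    (C : Vv n →ₗ[ℝ] Vv n →ₗ[ℝ] Vv n →ₗ[ℝ] ℝ) :
    Vv n →ₗ[ℝ] Vv n →ₗ[ℝ] Vv n →ₗ[ℝ] ℝ :=
  C.comp K - (C.comp K).flip + LinearMap.lflip.comp (C.comp K).flip

lemma tauL_apply {n : ℕ} (K : Vv n →ₗ[ℝ] Vv n)
    (C : Vv n →ₗ[ℝ] Vv n →ₗ[ℝ] Vv n →ₗ[ℝ] ℝ) (X Y Z : Vv n) :
    tauL n K C X Y Z = C (K X) Y Z - C (K Y) X Z + C (K Z) X Y := by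
  simp [tauL, LinearMap.lflip, LinearMap.flip_apply]
  rfl

lemma tauF_eq_tauL {n : ℕ} (K : Vv n →ₗ[ℝ] Vv n)
    (C : Vv n →ₗ[ℝ] Vv n →ₗ[ℝ] Vv n →ₗ[ℝ] ℝ) (X Y Z : Vv n) :
    tauF n K C X Y Z = tauL n K C X Y Z := by
  rw [tauL_apply]; rfl

lemma tauL_mem {n : ℕ} (K : Vv n →ₗ[ℝ] Vv n) (hK : ∀ v : Vv n, IsVert v → K v = 0)
    (C : Vv n →ₗ[ℝ] Vv n →ₗ[ℝ] Vv n →ₗ[ℝ] ℝ) (hC : C ∈ Fsub n) :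
    tauL n K C ∈ Lv3 n := by
  obtain ⟨c1, c2, c3⟩ := hC
  refine ⟨fun X Y Z => ?_, fun X Y Z => ?_, fun v Y Z hv => ?_, fun X v Z hv => ?_,
    fun X Y v hv => ?_⟩
  · rw [tauL_apply, tauL_apply]
    have h := c1 (K Z) Y X
    linarith
  · rw [tauL_apply, tauL_apply]
    have h := c1 (K X) Y Z
    linarith
  · rw [tauL_apply]
    simp [hK v hv, c2 (K Y) v Z hv, c2 (K Z) v Y hv]
  · rw [tauL_apply]
    simp [hK v hv, c2 (K X) v Z hv, c3 (K Z) X v hv]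
  · rw [tauL_apply]
    simp [hK v hv, c3 (K X) Y v hv, c3 (K Y) X v hv]

/-- The `dt`-component functional. -/
noncomputable def tc (n : ℕ) : Vv n →ₗ[ℝ] ℝ :=
  (LinearMap.proj 0).comp (LinearMap.fst ℝ (Fin (n + 1) → ℝ) (Fin n → ℝ))

lemma tc_apply {n : ℕ} (X : Vv n) : tc n X = X.1 0 := rfl

/-- The correction term used in the surjectivity proof for `τ_J`. -/
noncomputable def Tmap (n : ℕ) (D : Vv n →ₗ[ℝ] Vv n →ₗ[ℝ] Vv n →ₗ[ℝ] ℝ) :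
    Vv n →ₗ[ℝ] Vv n →ₗ[ℝ] Vv n →ₗ[ℝ] ℝ where
  toFun U := (tc n).smulRight ((D (e0v n)).comp (sigv n) U) -
    (((D (e0v n)).comp (sigv n)) U).smulRight (tc n)
  map_add' U V := by
    refine LinearMap.ext fun Y => LinearMap.ext fun Z => ?_
    simp
    ring
  map_smul' c U := by
    refine LinearMap.ext fun Y => LinearMap.ext fun Z => ?_
    simp
    ring

lemma Tmap_apply {n : ℕ} (D : Vv n →ₗ[ℝ] Vv n →ₗ[ℝ] Vv n →ₗ[ℝ] ℝ) (U Y Z : Vv n) :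
    Tmap n D U Y Z = Y.1 0 * D (e0v n) (sigv n U) Z - D (e0v n) (sigv n U) Y * Z.1 0 := by
  simp [Tmap, tc_apply]

/-- Both `τ_J : F → Λ³T_v*` and `τ_h : F → Λ³T_v*` are well defined (for `C ∈ F`,
`τ_J C` and `τ_h C` are alternating trilinear forms, semi-basic in all arguments)
and surjective. -/
theorem stmt5 (n : ℕ) (hn : 1 ≤ n) :
    (∀ C ∈ Fsub n, ∃ D ∈ Lv3 n, ∀ X Y Z, tauF n (Jv n) C X Y Z = D X Y Z) ∧
    (∀ C ∈ Fsub n, ∃ D ∈ Lv3 n, ∀ X Y Z, tauF n (Hv n) C X Y Z = D X Y Z) ∧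
    (∀ D ∈ Lv3 n, ∃ C ∈ Fsub n, ∀ X Y Z, tauF n (Jv n) C X Y Z = D X Y Z) ∧
    (∀ D ∈ Lv3 n, ∃ C ∈ Fsub n, ∀ X Y Z, tauF n (Hv n) C X Y Z = D X Y Z) := by
  refine ⟨fun C hC => ⟨tauL n (Jv n) C, tauL_mem (Jv n) Jv_vert C hC, tauF_eq_tauL _ C⟩,
    fun C hC => ⟨tauL n (Hv n) C, tauL_mem (Hv n) Hv_vert C hC, tauF_eq_tauL _ C⟩,
    fun D hD => ?_, fun D hD => ?_⟩
  · -- surjectivity of τ_J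
    obtain ⟨d1, d2, d3, d4, d5⟩ := hD
    have e00 : ∀ Z : Vv n, D (e0v n) (e0v n) Z = 0 := fun Z => by
      have h := d1 (e0v n) (e0v n) Z; linarith
    refine ⟨(3⁻¹ : ℝ) • (D.comp (sigv n) - (2⁻¹ : ℝ) • Tmap n D), ?_, fun X Y Z => ?_⟩
    · refine ⟨fun U Y Z => ?_, fun U v Z hv => ?_, fun U Y v hv => ?_⟩
      · simp only [LinearMap.smul_apply, LinearMap.sub_apply, LinearMap.comp_apply,
          smul_eq_mul, Tmap_apply]
        linear_combination (3⁻¹ : ℝ) * d2 (sigv n U) Y Z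
      · have hv0 : v.1 0 = 0 := by rw [hv]; rfl
        simp only [LinearMap.smul_apply, LinearMap.sub_apply, LinearMap.comp_apply,
          smul_eq_mul, Tmap_apply, hv0, d4 (sigv n U) v Z hv, d5 (e0v n) (sigv n U) v hv]
        ring
      · have hv0 : v.1 0 = 0 := by rw [hv]; rfl
        simp only [LinearMap.smul_apply, LinearMap.sub_apply, LinearMap.comp_apply,
          smul_eq_mul, Tmap_apply, hv0, d5 (sigv n U) Y v hv, d5 (e0v n) (sigv n U) v hv]
        ring
    · -- the key identity
      have gA1 : D (sigv n (Jv n X)) Y Z = D X Y Z - X.1 0 * D (e0v n) Y Z := by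
        have h := expand1 D d3 X Y Z; linarith
      have gA2 : D (sigv n (Jv n Y)) X Z = -D X Y Z - Y.1 0 * D (e0v n) X Z := by
        have h := expand1 D d3 Y X Z
        have h2 := d1 Y X Z
        linarith
      have gA3 : D (sigv n (Jv n Z)) X Y = D X Y Z - Z.1 0 * D (e0v n) X Y := by
        have h := expand1 D d3 Z X Y
        have h2 := d1 Z X Y
        have h3 := d2 X Y Z
        linarith
      have gB : ∀ A B : Vv n, D (e0v n) (sigv n (Jv n A)) B = D (e0v n) A B := by
        intro A B
        have h := expand2 D d4 (e0v n) A B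
        rw [e00 B] at h
        linarith
      simp only [tauF, LinearMap.smul_apply, LinearMap.sub_apply, LinearMap.comp_apply,
        smul_eq_mul, Tmap_apply, gB]
      rw [gA1, gA2, gA3, d2 (e0v n) Y X, d2 (e0v n) Z Y, d2 (e0v n) Z X]
      ring
  · -- surjectivity of τ_h
    obtain ⟨d1, d2, d3, d4, d5⟩ := hD
    refine ⟨(3⁻¹ : ℝ) • D, ⟨fun X Y Z => ?_, fun X v Z hv => ?_, fun X Y v hv => ?_⟩,
      fun X Y Z => ?_⟩
    · simp only [LinearMap.smul_apply, smul_eq_mul]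
      have h := d2 X Y Z; linarith
    · simp [d4 X v Z hv]
    · simp [d5 X Y v hv]
    · simp only [tauF, LinearMap.smul_apply, smul_eq_mul]
      rw [Hv_apply, Hv_apply, Hv_apply, hred1 D d3, hred1 D d3, hred1 D d3]
      have h1 := d1 Y X Z
      have h2 := d1 Z X Y
      have h3 := d2 X Y Z
      linarith
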